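/- Let R be an n×n real symmetric positive definite matrix, M : ℕ → ℝ a nonnegative function, g : ℕ → ℝ and x : ℕ → ℝⁿ functions, such that the series ∑_{i=0}^∞ M(i), ∑_{i=0}^∞ M(i)g(i), ∑_{i=0}^∞ M(i)g(i)², ∑_{i=0}^∞ M(i)x(i), ∑_{i=0}^∞ M(i)g(i)x(i) and ∑_{i=0}^∞ M(i)x(i)ᵀRx(i) are (absolutely) convergent, ∑_{i=0}^∞ M(i)g(i) = 0, ∑_{i=0}^∞ M(i)g(i)² > 0, and M₀ := ∑_{i=0}^∞ M(i) > 0. Then ∑_{i=0}^∞ M(i) x(i)ᵀ R x(i) ≥ M₀⁻¹ (∑_{i=0}^∞ M(i)x(i))ᵀ R (∑_{i=0}^∞ M(i)x(i)) + (∑_{i=0}^∞ M(i)g(i)²)⁻¹ Πᵀ R Π, where Π := ∑_{i=0}^∞ M(i)g(i)x(i). -/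

import Mathlib

open Matrix

private lemma tsum_dot_aux {n : ℕ} {v : ℕ → Fin n → ℝ} (c : Fin n → ℝ)
    (hv : Summable v) :
    Summable (fun i => v i ⬝ᵥ c) ∧ (∑' i, v i ⬝ᵥ c) = (∑' i, v i) ⬝ᵥ c := by
  have hcomp : ∀ j, Summable (fun i => v i j) := fun j => Pi.summable.mp hv j
  have hterm : ∀ j, Summable (fun i => v i j * c j) := fun j => (hcomp j).mul_right _
  constructor
  · simpa [dotProduct] using summable_sum (fun j _ => hterm j)
  · calc (∑' i, v i ⬝ᵥ c) = ∑' i, ∑ j, v i j * c j := by simp [dotProduct]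
      _ = ∑ j, ∑' i, v i j * c j := Summable.tsum_finsetSum (fun j _ => hterm j)
      _ = ∑ j, (∑' i, v i j) * c j := by
            refine Finset.sum_congr rfl fun j _ => ?_; exact tsum_mul_right
      _ = (∑' i, v i) ⬝ᵥ c := by
            simp only [dotProduct]
            refine Finset.sum_congr rfl fun j _ => ?_
            rw [tsum_apply hv]

/-- Theorem 3: extended Jensen summation inequality with infinite sequences. -/
theorem extended_jensen_summation_infinite {n : ℕ}
    (R : Matrix (Fin n) (Fin n) ℝ) (hRsym : R.IsSymm) (hRpd : R.PosDef)
    (M : ℕ → ℝ) (g : ℕ → ℝ) (x : ℕ → (Fin n → ℝ))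
    (hMnonneg : ∀ i, 0 ≤ M i)
    (hM : Summable M)
    (hMg : Summable (fun i => M i * g i))
    (hMg2 : Summable (fun i => M i * (g i) ^ 2))
    (hMx : Summable (fun i => M i • x i))
    (hMgx : Summable (fun i => (M i * g i) • x i))
    (hMxRx : Summable (fun i => M i * (x i ⬝ᵥ R.mulVec (x i))))
    (hMg0 : ∑' i, M i * g i = 0)
    (hMg2pos : 0 < ∑' i, M i * (g i) ^ 2)
    (hM0pos : 0 < ∑' i, M i) :
    ∑' i, M i * (x i ⬝ᵥ R.mulVec (x i)) ≥
      (∑' i, M i)⁻¹ *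
        ((∑' i, M i • x i) ⬝ᵥ R.mulVec (∑' i, M i • x i)) +
      (∑' i, M i * (g i) ^ 2)⁻¹ *
        ((∑' i, (M i * g i) • x i) ⬝ᵥ R.mulVec (∑' i, (M i * g i) • x i)) := by
  -- symmetry of the bilinear form
  have hsymmB : ∀ u v : Fin n → ℝ, u ⬝ᵥ R *ᵥ v = v ⬝ᵥ R *ᵥ u := by
    intro u v
    rw [dotProduct_mulVec]
    nth_rewrite 1 [← hRsym.eq]
    rw [vecMul_transpose, dotProduct_comm]
  -- nonnegativity of the quadratic form
  have hpsd : ∀ u : Fin n → ℝ, 0 ≤ u ⬝ᵥ R *ᵥ u := by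
    intro u
    have := hRpd.posSemidef.dotProduct_mulVec_nonneg u
    simpa using this
  set A := ∑' i, M i with hA
  set C := ∑' i, M i * (g i) ^ 2 with hC
  set X := ∑' i, M i • x i with hX
  set P := ∑' i, (M i * g i) • x i with hP
  set Q := ∑' i, M i * (x i ⬝ᵥ R.mulVec (x i)) with hQ
  set a : Fin n → ℝ := A⁻¹ • X with ha
  set b : Fin n → ℝ := C⁻¹ • P with hb
  -- six pieces
  have h2 := tsum_dot_aux (R *ᵥ a) hMx
  have h3 := tsum_dot_aux (R *ᵥ b) hMgx
  set F : ℕ → ℝ := fun i =>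
    M i * (x i ⬝ᵥ R *ᵥ x i)
    + (-2) * ((M i • x i) ⬝ᵥ (R *ᵥ a))
    + (-2) * (((M i * g i) • x i) ⬝ᵥ (R *ᵥ b))
    + M i * (a ⬝ᵥ R *ᵥ a)
    + (M i * g i) * (2 * (a ⬝ᵥ R *ᵥ b))
    + (M i * g i ^ 2) * (b ⬝ᵥ R *ᵥ b) with hF
  have hFsummable : Summable F := by
    apply Summable.add
    apply Summable.add
    apply Summable.add
    apply Summable.add
    apply Summable.add
    · exact hMxRx
    · exact (h2.1.mul_left _)
    · exact (h3.1.mul_left _)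
    · exact hM.mul_right _
    · exact hMg.mul_right _
    · exact hMg2.mul_right _
  have hFeq : ∀ i, F i =
      M i * ((x i - a - g i • b) ⬝ᵥ R *ᵥ (x i - a - g i • b)) := by
    intro i
    have e1 : x i ⬝ᵥ R *ᵥ a = a ⬝ᵥ R *ᵥ x i := hsymmB _ _
    have e2 : x i ⬝ᵥ R *ᵥ b = b ⬝ᵥ R *ᵥ x i := hsymmB _ _
    have e3 : a ⬝ᵥ R *ᵥ b = b ⬝ᵥ R *ᵥ a := hsymmB _ _
    simp only [hF, Matrix.mulVec_sub, Matrix.mulVec_smul, sub_dotProduct,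
      dotProduct_sub, smul_dotProduct, dotProduct_smul, smul_eq_mul]
    rw [← e1, ← e2, ← e3]
    ring
  have hFnonneg : 0 ≤ ∑' i, F i := by
    apply tsum_nonneg
    intro i
    rw [hFeq i]
    exact mul_nonneg (hMnonneg i) (hpsd _)
  -- compute the tsum of F
  have htsumF : ∑' i, F i =
      Q + (-2) * (X ⬝ᵥ (R *ᵥ a)) + (-2) * (P ⬝ᵥ (R *ᵥ b))
        + A * (a ⬝ᵥ R *ᵥ a) + 0 * (2 * (a ⬝ᵥ R *ᵥ b)) + C * (b ⬝ᵥ R *ᵥ b) := by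
    rw [hF]
    rw [Summable.tsum_add (((((hMxRx.add (h2.1.mul_left _)).add (h3.1.mul_left _)).add
          (hM.mul_right _)).add (hMg.mul_right _))) (hMg2.mul_right _)]
    rw [Summable.tsum_add ((((hMxRx.add (h2.1.mul_left _)).add (h3.1.mul_left _)).add
          (hM.mul_right _))) (hMg.mul_right _)]
    rw [Summable.tsum_add (((hMxRx.add (h2.1.mul_left _)).add (h3.1.mul_left _)))
          (hM.mul_right _)]
    rw [Summable.tsum_add ((hMxRx.add (h2.1.mul_left _))) (h3.1.mul_left _)]
    rw [Summable.tsum_add hMxRx (h2.1.mul_left _)]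
    rw [tsum_mul_left, tsum_mul_left, tsum_mul_right, tsum_mul_right, tsum_mul_right]
    rw [h2.2, h3.2, ← hMg0]
  -- evaluate the dot products with a, b
  have hXa : X ⬝ᵥ (R *ᵥ a) = A⁻¹ * (X ⬝ᵥ R *ᵥ X) := by
    rw [ha, Matrix.mulVec_smul, dotProduct_smul, smul_eq_mul]
  have hPb : P ⬝ᵥ (R *ᵥ b) = C⁻¹ * (P ⬝ᵥ R *ᵥ P) := by
    rw [hb, Matrix.mulVec_smul, dotProduct_smul, smul_eq_mul]
  have haa : a ⬝ᵥ R *ᵥ a = A⁻¹ * (A⁻¹ * (X ⬝ᵥ R *ᵥ X)) := by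
    rw [ha, smul_dotProduct, smul_eq_mul, Matrix.mulVec_smul, dotProduct_smul, smul_eq_mul]
  have hbb : b ⬝ᵥ R *ᵥ b = C⁻¹ * (C⁻¹ * (P ⬝ᵥ R *ᵥ P)) := by
    rw [hb, smul_dotProduct, smul_eq_mul, Matrix.mulVec_smul, dotProduct_smul, smul_eq_mul]
  rw [htsumF, hXa, hPb, haa, hbb] at hFnonneg
  have hAne : A ≠ 0 := ne_of_gt hM0pos
  have hCne : C ≠ 0 := ne_of_gt hMg2pos
  have key : 0 ≤ Q - A⁻¹ * (X ⬝ᵥ R *ᵥ X) - C⁻¹ * (P ⬝ᵥ R *ᵥ P) := by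
    have hAA : A * (A⁻¹ * (A⁻¹ * (X ⬝ᵥ R *ᵥ X))) = A⁻¹ * (X ⬝ᵥ R *ᵥ X) := by
      field_simp
    have hCC : C * (C⁻¹ * (C⁻¹ * (P ⬝ᵥ R *ᵥ P))) = C⁻¹ * (P ⬝ᵥ R *ᵥ P) := by
      field_simp
    nlinarith [hFnonneg]
  linarith [key]
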